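/- Let X ∈ ℝ^{n×d} and X̃ ∈ ℝ^{n×k} be full-column-rank matrices with thin SVDs X = U S V^T and X̃ = Ũ S̃ Ṽ^T. Let y ∈ ℝ^n be a random vector with mean zero and covariance Σ with tr(Σ) > 0. Define the linear regression predictions f_y = X (X^T X)^{-1} X^T y and f̃_y = X̃ (X̃^T X̃)^{-1} X̃^T y. Then E[‖f_y − f̃_y‖²] / E[‖y‖²] = tr((U U^T + Ũ Ũ^T − 2 Ũ Ũ^T U U^T) Σ) / tr(Σ). -/

import Mathlib

open Matrix MeasureTheory

lemma proj_eq' {n d : ℕ} (X U : Matrix (Fin n) (Fin d) ℝ) (s : Fin d → ℝ)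
    (V : Matrix (Fin d) (Fin d) ℝ) (hU : Uᵀ * U = 1) (hs : ∀ i, 0 < s i)
    (hV : Vᵀ * V = 1) (hV' : V * Vᵀ = 1) (hX : X = U * Matrix.diagonal s * Vᵀ) :
    X * (Xᵀ * X)⁻¹ * Xᵀ = U * Uᵀ := by
  have hsne : ∀ i, s i * s i ≠ 0 := fun i => mul_ne_zero (hs i).ne' (hs i).ne'
  have hone : (fun i => s i * s i * (s i * s i)⁻¹) = fun _ : Fin d => (1:ℝ) := by
    funext i; exact mul_inv_cancel₀ (hsne i)
  have hone2 : (fun i => s i * ((s i * s i)⁻¹ * s i)) = fun _ : Fin d => (1:ℝ) := by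
    funext i
    rw [← mul_assoc, mul_comm (s i), mul_assoc]
    exact inv_mul_cancel₀ (hsne i)
  have hXtX : Xᵀ * X = V * Matrix.diagonal (fun i => s i * s i) * Vᵀ := by
    subst hX
    simp only [Matrix.transpose_mul, Matrix.transpose_transpose, Matrix.diagonal_transpose,
      Matrix.mul_assoc]
    rw [show Uᵀ * (U * (Matrix.diagonal s * Vᵀ)) = (Uᵀ * U) * (Matrix.diagonal s * Vᵀ) by
      simp only [Matrix.mul_assoc], hU, Matrix.one_mul,
      show Matrix.diagonal s * (Matrix.diagonal s * Vᵀ) = (Matrix.diagonal s * Matrix.diagonal s) * Vᵀ by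
      simp only [Matrix.mul_assoc], Matrix.diagonal_mul_diagonal]
  have hinv : (Xᵀ * X)⁻¹ = V * Matrix.diagonal (fun i => (s i * s i)⁻¹) * Vᵀ := by
    apply Matrix.inv_eq_right_inv
    rw [hXtX]
    simp only [Matrix.mul_assoc]
    rw [show Vᵀ * (V * (Matrix.diagonal (fun i => (s i * s i)⁻¹) * Vᵀ))
        = (Vᵀ * V) * (Matrix.diagonal (fun i => (s i * s i)⁻¹) * Vᵀ) by
      simp only [Matrix.mul_assoc], hV, Matrix.one_mul,
      show Matrix.diagonal (fun i => s i * s i) * (Matrix.diagonal (fun i => (s i * s i)⁻¹) * Vᵀ)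
        = (Matrix.diagonal (fun i => s i * s i) * Matrix.diagonal (fun i => (s i * s i)⁻¹)) * Vᵀ by
      simp only [Matrix.mul_assoc],
      Matrix.diagonal_mul_diagonal, hone, Matrix.diagonal_one, Matrix.one_mul, hV']
  rw [hinv, hX]
  simp only [Matrix.transpose_mul, Matrix.transpose_transpose, Matrix.diagonal_transpose,
    Matrix.mul_assoc]
  rw [show Vᵀ * (V * (Matrix.diagonal (fun i => (s i * s i)⁻¹) * (Vᵀ * (V * (Matrix.diagonal s * Uᵀ)))))
      = (Vᵀ * V) * (Matrix.diagonal (fun i => (s i * s i)⁻¹) * ((Vᵀ * V) * (Matrix.diagonal s * Uᵀ))) by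
    simp only [Matrix.mul_assoc], hV, Matrix.one_mul, Matrix.one_mul,
    show Matrix.diagonal s * (Matrix.diagonal (fun i => (s i * s i)⁻¹) * (Matrix.diagonal s * Uᵀ))
      = (Matrix.diagonal s * (Matrix.diagonal (fun i => (s i * s i)⁻¹) * Matrix.diagonal s)) * Uᵀ by
    simp only [Matrix.mul_assoc], Matrix.diagonal_mul_diagonal, Matrix.diagonal_mul_diagonal,
    hone2, Matrix.diagonal_one, Matrix.one_mul]

lemma quad_form_eq' {n : ℕ} (A : Matrix (Fin n) (Fin n) ℝ) (v : Fin n → ℝ) :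
    (A *ᵥ v) ⬝ᵥ (A *ᵥ v) = ∑ i, ∑ j, (Aᵀ * A) i j * (v i * v j) := by
  simp only [dotProduct, Matrix.mulVec, Matrix.mul_apply, Matrix.transpose_apply,
    Finset.sum_mul, Finset.mul_sum, dotProduct]
  rw [Finset.sum_comm]
  refine Finset.sum_congr rfl fun i _ => ?_
  rw [Finset.sum_comm]
  refine Finset.sum_congr rfl fun j _ => ?_
  refine Finset.sum_congr rfl fun r _ => ?_
  ring

/-- The normalized expected disagreement between linear regression models trained on two
embeddings equals the eigenspace instability measure. -/
theorem expected_disagreement_eq_eigenspace_instability {n d k : ℕ} {Ω : Type*}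
    [MeasurableSpace Ω] (μ : Measure Ω) [IsProbabilityMeasure μ]
    (X U : Matrix (Fin n) (Fin d) ℝ) (s : Fin d → ℝ) (V : Matrix (Fin d) (Fin d) ℝ)
    (Xt W : Matrix (Fin n) (Fin k) ℝ) (st : Fin k → ℝ) (Vt : Matrix (Fin k) (Fin k) ℝ)
    (hU : Uᵀ * U = 1) (hs : ∀ i, 0 < s i) (hV : Vᵀ * V = 1) (hV' : V * Vᵀ = 1)
    (hX : X = U * Matrix.diagonal s * Vᵀ) (hrank : IsUnit (Xᵀ * X).det)
    (hW : Wᵀ * W = 1) (hst : ∀ i, 0 < st i) (hVt : Vtᵀ * Vt = 1) (hVt' : Vt * Vtᵀ = 1)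
    (hXt : Xt = W * Matrix.diagonal st * Vtᵀ) (hrankt : IsUnit (Xtᵀ * Xt).det)
    (y : Ω → Fin n → ℝ) (C : Matrix (Fin n) (Fin n) ℝ)
    (hint : ∀ i j, Integrable (fun ω => y ω i * y ω j) μ)
    (hmean : ∀ i, ∫ ω, y ω i ∂μ = 0)
    (hcov : ∀ i j, ∫ ω, y ω i * y ω j ∂μ = C i j)
    (htr : 0 < C.trace) :
    (∫ ω, ((X * (Xᵀ * X)⁻¹ * Xᵀ) *ᵥ y ω - (Xt * (Xtᵀ * Xt)⁻¹ * Xtᵀ) *ᵥ y ω) ⬝ᵥ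
        ((X * (Xᵀ * X)⁻¹ * Xᵀ) *ᵥ y ω - (Xt * (Xtᵀ * Xt)⁻¹ * Xtᵀ) *ᵥ y ω) ∂μ) /
      (∫ ω, (y ω) ⬝ᵥ (y ω) ∂μ)
    = ((U * Uᵀ + W * Wᵀ - (2 : ℝ) • (W * Wᵀ * (U * Uᵀ))) * C).trace / C.trace := by
  have hP : X * (Xᵀ * X)⁻¹ * Xᵀ = U * Uᵀ := proj_eq' X U s V hU hs hV hV' hX
  have hQ : Xt * (Xtᵀ * Xt)⁻¹ * Xtᵀ = W * Wᵀ := proj_eq' Xt W st Vt hW hst hVt hVt' hXt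
  set P := U * Uᵀ with hPdef
  set Q := W * Wᵀ with hQdef
  set A := P - Q with hAdef
  have hCsymm : Cᵀ = C := by
    ext i j
    rw [Matrix.transpose_apply, ← hcov j i, ← hcov i j]
    congr 1; funext ω; ring
  -- pointwise rewrite of integrand
  have hpt : ∀ ω, ((X * (Xᵀ * X)⁻¹ * Xᵀ) *ᵥ y ω - (Xt * (Xtᵀ * Xt)⁻¹ * Xtᵀ) *ᵥ y ω) ⬝ᵥ
      ((X * (Xᵀ * X)⁻¹ * Xᵀ) *ᵥ y ω - (Xt * (Xtᵀ * Xt)⁻¹ * Xtᵀ) *ᵥ y ω)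
      = ∑ i, ∑ j, (Aᵀ * A) i j * (y ω i * y ω j) := by
    intro ω
    rw [hP, hQ, ← Matrix.sub_mulVec, ← hAdef, quad_form_eq']
  -- numerator
  have hnum : (∫ ω, ((X * (Xᵀ * X)⁻¹ * Xᵀ) *ᵥ y ω - (Xt * (Xtᵀ * Xt)⁻¹ * Xtᵀ) *ᵥ y ω) ⬝ᵥ
      ((X * (Xᵀ * X)⁻¹ * Xᵀ) *ᵥ y ω - (Xt * (Xtᵀ * Xt)⁻¹ * Xtᵀ) *ᵥ y ω) ∂μ)
      = ((Aᵀ * A) * C).trace := by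
    simp_rw [hpt]
    refine (integral_finset_sum _ (fun i _ => integrable_finset_sum _
      (fun j _ => ((hint i j).const_mul _)))).trans ?_
    have : ∀ i ∈ Finset.univ, (∫ ω, ∑ j, (Aᵀ * A) i j * (y ω i * y ω j) ∂μ)
        = ∑ j, (Aᵀ * A) i j * C i j := by
      intro i _
      refine (integral_finset_sum _ (fun j _ => ((hint i j).const_mul _))).trans ?_
      exact Finset.sum_congr rfl fun j _ => by rw [integral_const_mul, hcov]
    rw [Finset.sum_congr rfl this]
    simp only [Matrix.trace, Matrix.diag, Matrix.mul_apply]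
    refine Finset.sum_congr rfl fun i _ => Finset.sum_congr rfl fun j _ => ?_
    rw [show C i j = C j i from by
      conv_lhs => rw [← hCsymm]
      exact Matrix.transpose_apply C i j]
  -- denominator
  have hden : (∫ ω, (y ω) ⬝ᵥ (y ω) ∂μ) = C.trace := by
    simp_rw [dotProduct]
    rw [integral_finset_sum _ (fun i _ => hint i i)]
    rw [Matrix.trace]
    exact Finset.sum_congr rfl fun i _ => hcov i i
  rw [hnum, hden]
  -- trace identity
  congr 1
  have hPsymm : Pᵀ = P := by rw [hPdef, Matrix.transpose_mul, Matrix.transpose_transpose]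
  have hQsymm : Qᵀ = Q := by rw [hQdef, Matrix.transpose_mul, Matrix.transpose_transpose]
  have hPP : P * P = P := by
    rw [hPdef, Matrix.mul_assoc, ← Matrix.mul_assoc Uᵀ U Uᵀ, hU, Matrix.one_mul]
  have hQQ : Q * Q = Q := by
    rw [hQdef, Matrix.mul_assoc, ← Matrix.mul_assoc Wᵀ W Wᵀ, hW, Matrix.one_mul]
  have hAA : Aᵀ * A = P + Q - P * Q - Q * P := by
    rw [hAdef, Matrix.transpose_sub, hPsymm, hQsymm, Matrix.sub_mul, Matrix.mul_sub,
      Matrix.mul_sub, hPP, hQQ]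
    abel
  have htrcomm : (P * Q * C).trace = (Q * P * C).trace := by
    rw [← Matrix.trace_transpose (P * Q * C), Matrix.transpose_mul, Matrix.transpose_mul,
      hPsymm, hQsymm, hCsymm, Matrix.trace_mul_comm, ← Matrix.mul_assoc]
  rw [hAA]
  have expand : (P + Q - P * Q - Q * P) * C = P * C + Q * C - P * Q * C - Q * P * C := by
    rw [Matrix.sub_mul, Matrix.sub_mul, Matrix.add_mul]
  have expand2 : (P + Q - (2:ℝ) • (Q * P)) * C = P * C + Q * C - ((2:ℝ) • (Q * P)) * C := by
    rw [Matrix.sub_mul, Matrix.add_mul]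
  rw [expand, expand2, Matrix.trace_sub, Matrix.trace_sub, Matrix.trace_sub, Matrix.trace_add,
    htrcomm, Matrix.smul_mul, Matrix.trace_smul, smul_eq_mul]
  ring
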